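/- For every i ∈ I = {1,…,n−1}, the twisted commutator [x_i⁻(0), x_θ⁻(1)]_{c_i} = x_i⁻(0)·x_θ⁻(1) − c_i·x_θ⁻(1)·x_i⁻(0) vanishes in 𝒰, where c_i = ⟨ω_i', ω_θ⟩ = ∏_{j∈I} ⟨i,j⟩; explicitly c₁ = s^{−1}, c_{n−1} = r, and c_i = 1 for 1 < i < n−1. -/

import Mathlib

noncomputable section

set_option synthInstance.maxHeartbeats 1000000
set_option maxHeartbeats 1000000

open scoped TensorProduct

/-- The base field `K = ℚ(r^{1/2}, s^{1/2})`. -/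
abbrev Kf : Type := FractionRing (MvPolynomial (Fin 2) ℚ)

/-- `r^{1/2}`. -/
def rh : Kf := algebraMap (MvPolynomial (Fin 2) ℚ) Kf (MvPolynomial.X 0)
/-- `s^{1/2}`. -/
def sh : Kf := algebraMap (MvPolynomial (Fin 2) ℚ) Kf (MvPolynomial.X 1)
/-- `r = (r^{1/2})^2`. -/
def rr : Kf := rh ^ 2
/-- `s = (s^{1/2})^2`. -/
def ss : Kf := sh ^ 2

/-- the `q`-twisted commutator `[x, y]_q = x y - q (y x)`. -/
def qbr {A : Type} [Ring A] [Algebra Kf A] (q : Kf) (x y : A) : A := x * y - q • (y * x)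

/-- integer powers using a chosen generator and its chosen inverse. -/
def zpw {A : Type} [Monoid A] (x xi : A) (k : ℤ) : A :=
  if 0 ≤ k then x ^ k.toNat else xi ^ (-k).toNat

/-- left-nested twisted bracket `[⋯[[g a, g (a+1)]_q, g (a+2)]_q, …, g (b-1)]_q`. -/
def nestL {A : Type} [Ring A] [Algebra Kf A] (q : Kf) (g : ℕ → A) (a : ℕ) : ℕ → A
  | 0 => 0
  | b+1 => if b ≤ a then g a else qbr q (nestL q g a b) (g b)

/-- right-nested twisted bracket `[g (b-1), …, [g (a+2), [g (a+1), g a]_q]_q ⋯]_q`. -/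
def nestR {A : Type} [Ring A] [Algebra Kf A] (q : Kf) (g : ℕ → A) (a : ℕ) : ℕ → A
  | 0 => 0
  | b+1 => if b ≤ a then g a else qbr q (g b) (nestR q g a b)

/-- Coefficients of `exp (∑_{ℓ ≥ 1} c ℓ z^ℓ)`, computed by the Newton-type recursion
`m E_m = ∑_{ℓ=1}^{m} ℓ · (c ℓ) · E_{m-ℓ}` (valid whenever the `c ℓ` pairwise commute). -/
def expCoeff {A : Type} [Ring A] [Algebra Kf A] (c : ℕ → A) : ℕ → A
  | 0 => 1
  | m+1 => (((m+1 : ℕ) : Kf))⁻¹ •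
      ∑ l ∈ Finset.range (m+1), (((l+1 : ℕ) : Kf)) • (c (l+1) * expCoeff c (m - l))
  termination_by m => m
  decreasing_by omega

/-- `(ε_j, α_i)` for `j ∈ {1,…,n}`, `i ∈ I₀ = {0,…,n-1}`. -/
def epsAlpha (n j i : ℕ) : ℤ :=
  if i = 0 then (if j = n then 1 else 0) - (if j = 1 then 1 else 0)
  else (if j = i then 1 else 0) - (if j = i + 1 then 1 else 0)

/-- `⟨ω_i', ω_j⟩` for `i, j ∈ I₀`:  `r^{(ε_j,α_i)} s^{(ε_{j+1},α_i)}` for `j ∈ I`, and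
`r^{-(ε_{i+1},α₀)} s^{(ε₁,α_i)}` for `j = 0`. -/
def pairO (n i j : ℕ) : Kf :=
  if j = 0 then rr ^ (-(epsAlpha n (i+1) 0)) * ss ^ (epsAlpha n 1 i)
  else rr ^ (epsAlpha n j i) * ss ^ (epsAlpha n (j+1) i)

/-- the coefficient in relation (A3): `s^{(ε_j,α_i)} r^{(ε_{j+1},α_i)}` resp.
`s^{-(ε_{i+1},α₀)} r^{(ε₁,α_i)}`. -/
def pairO' (n i j : ℕ) : Kf :=
  if j = 0 then ss ^ (-(epsAlpha n (i+1) 0)) * rr ^ (epsAlpha n 1 i)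
  else ss ^ (epsAlpha n j i) * rr ^ (epsAlpha n (j+1) i)

/-- `⟨i,j⟩^{1/2} = r^{(ε_j,α_i)/2} s^{(ε_{j+1},α_i)/2}` for `i, j ∈ I` (translation invariant). -/
def prH (i j : ℤ) : Kf :=
  if j = i then rh * sh⁻¹ else if j = i + 1 then rh⁻¹ else if j = i - 1 then sh else 1

/-- the structure constants `⟨i,j⟩ = r^{(ε_j,α_i)} s^{(ε_{j+1},α_i)}` for `i, j ∈ I`. -/
def pr (i j : ℤ) : Kf := (prH i j) ^ 2

/-- the Cartan matrix of `sl_n` (entries only depend on the difference of indices). -/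
def aC (i j : ℤ) : ℤ := if i = j then 2 else if (i - j).natAbs = 1 then -1 else 0

/-- the scalar `(rs)^{|ℓ|/2} (⟨i,i⟩^{ℓ a_{ij}/2} - ⟨i,i⟩^{-ℓ a_{ij}/2}) / (d (r-s))`. -/
def braceC (i j : ℤ) (l : ℤ) (d : ℤ) : Kf :=
  ((rh * sh) ^ |l| * ((rh * sh⁻¹) ^ (l * aC i j) - (rh * sh⁻¹) ^ (-(l * aC i j)))) /
    ((d : Kf) * (rr - ss))
/-! ## The two-parameter quantum affine algebra `U_{r,s}(̂sl_n)` (Definition 2.1) -/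

/-- the Chevalley-Kac-Lusztig generators of `U_{r,s}(̂sl_n)`. -/
inductive UGen (n : ℕ) : Type
  | e  : Fin n → UGen n
  | f  : Fin n → UGen n
  | w  : Fin n → UGen n
  | wi : Fin n → UGen n
  | w' : Fin n → UGen n
  | w'i : Fin n → UGen n
  | gh : UGen n
  | ghi : UGen n
  | g'h : UGen n
  | g'hi : UGen n
  | dd : UGen n
  | ddi : UGen n
  | dd' : UGen n
  | dd'i : UGen n

namespace UGen

/-- toral (group-like) generators. -/
def toral {n : ℕ} : UGen n → Prop
  | .e _ => False
  | .f _ => False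
  | _ => True

/-- the generators `γ^{±1/2}, γ'^{±1/2}`. -/
def isGamma {n : ℕ} : UGen n → Prop
  | .gh => True
  | .ghi => True
  | .g'h => True
  | .g'hi => True
  | _ => False

/-- mutually inverse pairs of generators. -/
def invPair {n : ℕ} : UGen n → UGen n → Prop
  | .w i, .wi j => i = j
  | .wi i, .w j => i = j
  | .w' i, .w'i j => i = j
  | .w'i i, .w' j => i = j
  | .gh, .ghi => True
  | .ghi, .gh => True
  | .g'h, .g'hi => True
  | .g'hi, .g'h => True
  | .dd, .ddi => True
  | .ddi, .dd => True
  | .dd', .dd'i => True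
  | .dd'i, .dd' => True
  | _, _ => False

end UGen

namespace Upre

variable (n : ℕ)

/-- the free algebra on the generators. -/
abbrev F (n : ℕ) := FreeAlgebra Kf (UGen n)

def E (i : Fin n) : F n := FreeAlgebra.ι Kf (UGen.e i)
def Fm (i : Fin n) : F n := FreeAlgebra.ι Kf (UGen.f i)
def W (i : Fin n) : F n := FreeAlgebra.ι Kf (UGen.w i)
def W' (i : Fin n) : F n := FreeAlgebra.ι Kf (UGen.w' i)
def Gh : F n := FreeAlgebra.ι Kf UGen.gh
def G'h : F n := FreeAlgebra.ι Kf UGen.g'h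
def Dd : F n := FreeAlgebra.ι Kf UGen.dd
def Dd' : F n := FreeAlgebra.ι Kf UGen.dd'

end Upre

/-- adjacency in the affine Dynkin diagram of type `A_{n-1}^{(1)}` (a cycle on `I₀`). -/
def affAdj (n : ℕ) (i j : Fin n) : Prop :=
  (i.val + 1) % n = j.val ∨ (j.val + 1) % n = i.val

open Upre in
/-- the defining relations (A1)–(A7) of `U_{r,s}(̂sl_n)`. -/
inductive URel (n : ℕ) : Upre.F n → Upre.F n → Prop
  | inv (g h : UGen n) (hp : g.invPair h) :
      URel n (FreeAlgebra.ι Kf g * FreeAlgebra.ι Kf h) 1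
  | toralComm (g h : UGen n) (hg : g.toral) (hh : h.toral) :
      URel n (FreeAlgebra.ι Kf g * FreeAlgebra.ι Kf h) (FreeAlgebra.ι Kf h * FreeAlgebra.ι Kf g)
  | gammaCentral (c g : UGen n) (hc : c.isGamma) :
      URel n (FreeAlgebra.ι Kf c * FreeAlgebra.ι Kf g) (FreeAlgebra.ι Kf g * FreeAlgebra.ι Kf c)
  | gammaProd : URel n (Gh n * Gh n) (((List.finRange n).map (W n)).prod)
  | gamma'Prod : URel n (G'h n * G'h n) (((List.finRange n).map (W' n)).prod)
  | gammaGamma' : URel n (Gh n * Gh n * (G'h n * G'h n)) ((rr * ss) • 1)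
  -- (A2)
  | dE (i : Fin n) : URel n (Dd n * E n i) ((if i.val = 0 then rr else 1) • (E n i * Dd n))
  | dF (i : Fin n) : URel n (Dd n * Fm n i) ((if i.val = 0 then rr⁻¹ else 1) • (Fm n i * Dd n))
  | wE (i j : Fin n) : URel n (W n j * E n i) (pairO n i j • (E n i * W n j))
  | wF (i j : Fin n) : URel n (W n j * Fm n i) ((pairO n i j)⁻¹ • (Fm n i * W n j))
  -- (A3)
  | d'E (i : Fin n) : URel n (Dd' n * E n i) ((if i.val = 0 then ss else 1) • (E n i * Dd' n))
  | d'F (i : Fin n) : URel n (Dd' n * Fm n i) ((if i.val = 0 then ss⁻¹ else 1) • (Fm n i * Dd' n))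
  | w'E (i j : Fin n) : URel n (W' n j * E n i) (pairO' n i j • (E n i * W' n j))
  | w'F (i j : Fin n) : URel n (W' n j * Fm n i) ((pairO' n i j)⁻¹ • (Fm n i * W' n j))
  -- (A4)
  | ef (i j : Fin n) : URel n (E n i * Fm n j - Fm n j * E n i)
      (if i = j then (rr - ss)⁻¹ • (W n i - W' n i) else 0)
  -- (A5)
  | ee (i j : Fin n) (hne : i ≠ j) (h : ¬ affAdj n i j) : URel n (E n i * E n j) (E n j * E n i)
  | ff (i j : Fin n) (hne : i ≠ j) (h : ¬ affAdj n i j) :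
      URel n (Fm n i * Fm n j) (Fm n j * Fm n i)
  -- (A6)
  | se1 (i j : Fin n) (h : j.val = (i.val + 1) % n) :
      URel n (E n i * E n i * E n j - (rr + ss) • (E n i * E n j * E n i)
      + (rr * ss) • (E n j * (E n i * E n i))) 0
  | se2 (i j : Fin n) (h : j.val = (i.val + 1) % n) :
      URel n (E n i * (E n j * E n j)
      - (rr + ss) • (E n j * E n i * E n j)
      + (rr * ss) • (E n j * E n j * E n i)) 0
  -- (A7)
  | sf1 (i j : Fin n) (h : j.val = (i.val + 1) % n) :
      URel n (Fm n i * Fm n i * Fm n j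
      - (rr⁻¹ + ss⁻¹) • (Fm n i * Fm n j * Fm n i)
      + (rr * ss)⁻¹ • (Fm n j * (Fm n i * Fm n i))) 0
  | sf2 (i j : Fin n) (h : j.val = (i.val + 1) % n) :
      URel n (Fm n i * (Fm n j * Fm n j)
      - (rr⁻¹ + ss⁻¹) • (Fm n j * Fm n i * Fm n j)
      + (rr * ss)⁻¹ • (Fm n j * Fm n j * Fm n i)) 0

/-- the two-parameter quantum affine algebra `U_{r,s}(̂sl_n)` of Definition 2.1. -/
abbrev Uq (n : ℕ) := RingQuot (URel n)

namespace Uq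

variable (n : ℕ)

/-- the canonical projection. -/
def mk : Upre.F n →ₐ[Kf] Uq n := RingQuot.mkAlgHom Kf (URel n)

def ue (i : Fin n) : Uq n := mk n (Upre.E n i)
def uf (i : Fin n) : Uq n := mk n (Upre.Fm n i)
def uw (i : Fin n) : Uq n := mk n (Upre.W n i)
def uwi (i : Fin n) : Uq n := mk n (FreeAlgebra.ι Kf (UGen.wi i))
def uw' (i : Fin n) : Uq n := mk n (Upre.W' n i)
def uw'i (i : Fin n) : Uq n := mk n (FreeAlgebra.ι Kf (UGen.w'i i))
def ugh : Uq n := mk n (Upre.Gh n)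
def ughi : Uq n := mk n (FreeAlgebra.ι Kf UGen.ghi)
def ug'h : Uq n := mk n (Upre.G'h n)
def ug'hi : Uq n := mk n (FreeAlgebra.ι Kf UGen.g'hi)
def ud : Uq n := mk n (Upre.Dd n)
def udi : Uq n := mk n (FreeAlgebra.ι Kf UGen.ddi)
def ud' : Uq n := mk n (Upre.Dd' n)
def ud'i : Uq n := mk n (FreeAlgebra.ι Kf UGen.dd'i)

/-- `γ = (γ^{1/2})²`. -/
def uγ : Uq n := ugh n * ugh n
def uγi : Uq n := ughi n * ughi n
def uγ' : Uq n := ug'h n * ug'h n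
def uγ'i : Uq n := ug'hi n * ug'hi n

/-- the positive nilpotent subalgebra `U_{r,s}(̂n)`. -/
def Nplus : Subalgebra Kf (Uq n) := Algebra.adjoin Kf (Set.range (ue n))
/-- the negative nilpotent subalgebra `U_{r,s}(̂n⁻)`. -/
def Nminus : Subalgebra Kf (Uq n) := Algebra.adjoin Kf (Set.range (uf n))
/-- the toral subalgebra `U⁰`. -/
def Utoral : Subalgebra Kf (Uq n) := Algebra.adjoin Kf
  (Set.range (uw n) ∪ Set.range (uwi n) ∪ Set.range (uw' n) ∪ Set.range (uw'i n) ∪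
    {ugh n, ughi n, ug'h n, ug'hi n, ud n, udi n, ud' n, ud'i n})

/-- the Hopf subalgebra `B̂`. -/
def Bhat : Subalgebra Kf (Uq n) := Algebra.adjoin Kf
  (Set.range (ue n) ∪ Set.range (uw n) ∪ Set.range (uwi n) ∪
    {ugh n, ughi n, ud n, udi n})

/-- the Hopf subalgebra `B̂'`. -/
def Bhat' : Subalgebra Kf (Uq n) := Algebra.adjoin Kf
  (Set.range (uf n) ∪ Set.range (uw' n) ∪ Set.range (uw'i n) ∪
    {ug'h n, ug'hi n, ud' n, ud'i n})

end Uq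
/-! ## The Drinfel'd realization `𝒰_{r,s}(̂sl_n)` (Definition 3.1) -/

/-- the Drinfel'd generators. -/
inductive DGen (n : ℕ) : Type
  | xp : Fin (n-1) → ℤ → DGen n
  | xm : Fin (n-1) → ℤ → DGen n
  | am : Fin (n-1) → {l : ℤ // l ≠ 0} → DGen n
  | w : Fin (n-1) → DGen n
  | wi : Fin (n-1) → DGen n
  | w' : Fin (n-1) → DGen n
  | w'i : Fin (n-1) → DGen n
  | gh : DGen n
  | ghi : DGen n
  | g'h : DGen n
  | g'hi : DGen n
  | dd : DGen n
  | ddi : DGen n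
  | dd' : DGen n
  | dd'i : DGen n

namespace DGen

def toral {n : ℕ} : DGen n → Prop
  | .xp _ _ => False
  | .xm _ _ => False
  | .am _ _ => False
  | _ => True

def isGamma {n : ℕ} : DGen n → Prop
  | .gh => True
  | .ghi => True
  | .g'h => True
  | .g'hi => True
  | _ => False

def isOmega {n : ℕ} : DGen n → Prop
  | .w _ => True
  | .wi _ => True
  | .w' _ => True
  | .w'i _ => True
  | _ => False

def invPair {n : ℕ} : DGen n → DGen n → Prop
  | .w i, .wi j => i = j
  | .wi i, .w j => i = j
  | .w' i, .w'i j => i = j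
  | .w'i i, .w' j => i = j
  | .gh, .ghi => True
  | .ghi, .gh => True
  | .g'h, .g'hi => True
  | .g'hi, .g'h => True
  | .dd, .ddi => True
  | .ddi, .dd => True
  | .dd', .dd'i => True
  | .dd'i, .dd' => True
  | _, _ => False

end DGen

namespace Dpre

/-- the free algebra on the Drinfel'd generators. -/
abbrev FD (n : ℕ) := FreeAlgebra Kf (DGen n)

variable (n : ℕ)

def XP (i : Fin (n-1)) (k : ℤ) : FD n := FreeAlgebra.ι Kf (DGen.xp i k)
def XM (i : Fin (n-1)) (k : ℤ) : FD n := FreeAlgebra.ι Kf (DGen.xm i k)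
def Am (i : Fin (n-1)) (l : ℤ) (hl : l ≠ 0) : FD n := FreeAlgebra.ι Kf (DGen.am i ⟨l, hl⟩)
def W (i : Fin (n-1)) : FD n := FreeAlgebra.ι Kf (DGen.w i)
def W' (i : Fin (n-1)) : FD n := FreeAlgebra.ι Kf (DGen.w' i)
def Gh : FD n := FreeAlgebra.ι Kf DGen.gh
def Ghi : FD n := FreeAlgebra.ι Kf DGen.ghi
def G'h : FD n := FreeAlgebra.ι Kf DGen.g'h
def G'hi : FD n := FreeAlgebra.ι Kf DGen.g'hi
def Dd : FD n := FreeAlgebra.ι Kf DGen.dd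
def Dd' : FD n := FreeAlgebra.ι Kf DGen.dd'

/-- `ω_i(m)`, the coefficient of `z^{-m}` in `ω_i exp((r-s) ∑_{ℓ≥1} a_i(ℓ) z^{-ℓ})`. -/
def OmP (i : Fin (n-1)) (m : ℕ) : FD n :=
  W n i * expCoeff (fun l => if hl : (l : ℤ) = 0 then 0 else (rr - ss) • Am n i l hl) m

/-- `ω_i'(-m)`, the coefficient of `z^{m}` in `ω_i' exp(-(r-s) ∑_{ℓ≥1} a_i(-ℓ) z^{ℓ})`. -/
def OmM (i : Fin (n-1)) (m : ℕ) : FD n :=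
  W' n i * expCoeff (fun l => if hl : (-l : ℤ) = 0 then 0 else (-(rr - ss)) • Am n i (-l) hl) m

/-- `ω_i(m)` for `m ∈ ℤ`, with `ω_i(-m) = 0` for `m > 0`. -/
def OmZ (i : Fin (n-1)) (m : ℤ) : FD n := if 0 ≤ m then OmP n i m.toNat else 0

/-- `ω_i'(m)` for `m ∈ ℤ`, with `ω_i'(m) = 0` for `m > 0`. -/
def OmZ' (i : Fin (n-1)) (m : ℤ) : FD n := if m ≤ 0 then OmM n i (-m).toNat else 0

end Dpre

open Dpre in
/-- the defining relations (D1)–(D9) of the Drinfel'd realization. -/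
inductive DRel (n : ℕ) : Dpre.FD n → Dpre.FD n → Prop
  -- (D1)
  | inv (g h : DGen n) (hp : g.invPair h) :
      DRel n (FreeAlgebra.ι Kf g * FreeAlgebra.ι Kf h) 1
  | toralComm (g h : DGen n) (hg : g.toral) (hh : h.toral) :
      DRel n (FreeAlgebra.ι Kf g * FreeAlgebra.ι Kf h) (FreeAlgebra.ι Kf h * FreeAlgebra.ι Kf g)
  | gammaCentral (c g : DGen n) (hc : c.isGamma) :
      DRel n (FreeAlgebra.ι Kf c * FreeAlgebra.ι Kf g) (FreeAlgebra.ι Kf g * FreeAlgebra.ι Kf c)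
  | gammaGamma' : DRel n (Gh n * Gh n * (G'h n * G'h n)) ((rr * ss) • 1)
  -- (D2)
  | d2 (i j : Fin (n-1)) (l l' : ℤ) (hl : l ≠ 0) (hl' : l' ≠ 0) :
      DRel n (Am n i l hl * Am n j l' hl' - Am n j l' hl' * Am n i l hl)
        (if l + l' = 0 then
          (braceC i j l |l| * (rr - ss)⁻¹) • (zpw (Gh n) (Ghi n) (2*|l|) - zpw (G'h n) (G'hi n) (2*|l|))
         else 0)
  -- (D3)
  | d3 (i : Fin (n-1)) (l : ℤ) (hl : l ≠ 0) (g : DGen n) (hg : g.isOmega) :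
      DRel n (Am n i l hl * FreeAlgebra.ι Kf g) (FreeAlgebra.ι Kf g * Am n i l hl)
  -- (D4)
  | d4xp (i : Fin (n-1)) (k : ℤ) : DRel n (Dd n * XP n i k) (rr ^ k • (XP n i k * Dd n))
  | d4xm (i : Fin (n-1)) (k : ℤ) : DRel n (Dd n * XM n i k) (rr ^ k • (XM n i k * Dd n))
  | d4a (i : Fin (n-1)) (l : ℤ) (hl : l ≠ 0) :
      DRel n (Dd n * Am n i l hl) (rr ^ l • (Am n i l hl * Dd n))
  | d4'xp (i : Fin (n-1)) (k : ℤ) : DRel n (Dd' n * XP n i k) (ss ^ k • (XP n i k * Dd' n))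
  | d4'xm (i : Fin (n-1)) (k : ℤ) : DRel n (Dd' n * XM n i k) (ss ^ k • (XM n i k * Dd' n))
  | d4'a (i : Fin (n-1)) (l : ℤ) (hl : l ≠ 0) :
      DRel n (Dd' n * Am n i l hl) (ss ^ l • (Am n i l hl * Dd' n))
  -- (D5)
  | d5wp (i j : Fin (n-1)) (k : ℤ) :
      DRel n (W n i * XP n j k) (pr j i • (XP n j k * W n i))
  | d5wm (i j : Fin (n-1)) (k : ℤ) :
      DRel n (W n i * XM n j k) ((pr j i)⁻¹ • (XM n j k * W n i))
  | d5w'p (i j : Fin (n-1)) (k : ℤ) :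
      DRel n (W' n i * XP n j k) ((pr i j)⁻¹ • (XP n j k * W' n i))
  | d5w'm (i j : Fin (n-1)) (k : ℤ) :
      DRel n (W' n i * XM n j k) (pr i j • (XM n j k * W' n i))
  -- (D6)
  | d6np (i j : Fin (n-1)) (l k : ℤ) (hl : l < 0) :
      DRel n (Am n i l hl.ne * XP n j k - XP n j k * Am n i l hl.ne)
        (braceC i j l l • (zpw (Gh n) (Ghi n) l * XP n j (l+k)))
  | d6nm (i j : Fin (n-1)) (l k : ℤ) (hl : l < 0) :
      DRel n (Am n i l hl.ne * XM n j k - XM n j k * Am n i l hl.ne)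
        ((-(braceC i j l l)) • (zpw (Gh n) (Ghi n) (-l) * XM n j (l+k)))
  | d6pp (i j : Fin (n-1)) (l k : ℤ) (hl : 0 < l) :
      DRel n (Am n i l hl.ne' * XP n j k - XP n j k * Am n i l hl.ne')
        (braceC i j l l • (zpw (G'h n) (G'hi n) l * XP n j (l+k)))
  | d6pm (i j : Fin (n-1)) (l k : ℤ) (hl : 0 < l) :
      DRel n (Am n i l hl.ne' * XM n j k - XM n j k * Am n i l hl.ne')
        ((-(braceC i j l l)) • (zpw (G'h n) (G'hi n) (-l) * XM n j (l+k)))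
  -- (D7)
  | d7p (i j : Fin (n-1)) (k k' : ℤ) :
      DRel n (XP n i (k+1) * XP n j k' - pr j i • (XP n j k' * XP n i (k+1))
          + (prH j i * (prH i j)⁻¹) • (XP n j (k'+1) * XP n i k - pr i j • (XP n i k * XP n j (k'+1)))) 0
  | d7m (i j : Fin (n-1)) (k k' : ℤ) :
      DRel n (XM n i (k+1) * XM n j k' - (pr j i)⁻¹ • (XM n j k' * XM n i (k+1))
          + ((prH j i)⁻¹ * prH i j) • (XM n j (k'+1) * XM n i k - (pr i j)⁻¹ • (XM n i k * XM n j (k'+1)))) 0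
  -- (D8)
  | d8 (i j : Fin (n-1)) (k k' : ℤ) :
      DRel n (XP n i k * XM n j k' - XM n j k' * XP n i k)
        (if i = j then
          (rr - ss)⁻¹ • (zpw (G'h n) (G'hi n) (-2*k) * zpw (Gh n) (Ghi n) (-(k+k')) * OmZ n i (k+k')
            - zpw (Gh n) (Ghi n) (2*k') * zpw (G'h n) (G'hi n) (k+k') * OmZ' n i (k+k'))
         else 0)
  -- (D9₁)
  | d91p (i j : Fin (n-1)) (h : aC i j = 0) (m k : ℤ) :
      DRel n (XP n i m * XP n j k) (XP n j k * XP n i m)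
  | d91m (i j : Fin (n-1)) (h : aC i j = 0) (m k : ℤ) :
      DRel n (XM n i m * XM n j k) (XM n j k * XM n i m)
  -- (D9₂)
  | d92p (i j : Fin (n-1)) (h : aC i j = -1) (hij : (i : ℕ) < j) (m1 m2 k : ℤ) :
      DRel n ((XP n i m1 * XP n i m2 * XP n j k - (rr + ss) • (XP n i m1 * XP n j k * XP n i m2)
          + (rr * ss) • (XP n j k * XP n i m1 * XP n i m2))
        + (XP n i m2 * XP n i m1 * XP n j k - (rr + ss) • (XP n i m2 * XP n j k * XP n i m1)
          + (rr * ss) • (XP n j k * XP n i m2 * XP n i m1))) 0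
  | d92m (i j : Fin (n-1)) (h : aC i j = -1) (hij : (i : ℕ) < j) (m1 m2 k : ℤ) :
      DRel n ((XM n i m1 * XM n i m2 * XM n j k - (rr⁻¹ + ss⁻¹) • (XM n i m1 * XM n j k * XM n i m2)
          + (rr * ss)⁻¹ • (XM n j k * XM n i m1 * XM n i m2))
        + (XM n i m2 * XM n i m1 * XM n j k - (rr⁻¹ + ss⁻¹) • (XM n i m2 * XM n j k * XM n i m1)
          + (rr * ss)⁻¹ • (XM n j k * XM n i m2 * XM n i m1))) 0
  -- (D9₃)
  | d93p (i j : Fin (n-1)) (h : aC i j = -1) (hij : (j : ℕ) < i) (m1 m2 k : ℤ) :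
      DRel n ((XP n i m1 * XP n i m2 * XP n j k - (rr⁻¹ + ss⁻¹) • (XP n i m1 * XP n j k * XP n i m2)
          + (rr * ss)⁻¹ • (XP n j k * XP n i m1 * XP n i m2))
        + (XP n i m2 * XP n i m1 * XP n j k - (rr⁻¹ + ss⁻¹) • (XP n i m2 * XP n j k * XP n i m1)
          + (rr * ss)⁻¹ • (XP n j k * XP n i m2 * XP n i m1))) 0
  | d93m (i j : Fin (n-1)) (h : aC i j = -1) (hij : (j : ℕ) < i) (m1 m2 k : ℤ) :
      DRel n ((XM n i m1 * XM n i m2 * XM n j k - (rr + ss) • (XM n i m1 * XM n j k * XM n i m2)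
          + (rr * ss) • (XM n j k * XM n i m1 * XM n i m2))
        + (XM n i m2 * XM n i m1 * XM n j k - (rr + ss) • (XM n i m2 * XM n j k * XM n i m1)
          + (rr * ss) • (XM n j k * XM n i m2 * XM n i m1))) 0

/-- the Drinfel'd realization `𝒰_{r,s}(̂sl_n)`. -/
abbrev DU (n : ℕ) := RingQuot (DRel n)

namespace DU

variable (n : ℕ)

/-- the canonical projection. -/
def mk : Dpre.FD n →ₐ[Kf] DU n := RingQuot.mkAlgHom Kf (DRel n)

def uxp (i : Fin (n-1)) (k : ℤ) : DU n := mk n (Dpre.XP n i k)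
def uxm (i : Fin (n-1)) (k : ℤ) : DU n := mk n (Dpre.XM n i k)
def ua (i : Fin (n-1)) (l : ℤ) (hl : l ≠ 0) : DU n := mk n (Dpre.Am n i l hl)
def uw (i : Fin (n-1)) : DU n := mk n (Dpre.W n i)
def uwi (i : Fin (n-1)) : DU n := mk n (FreeAlgebra.ι Kf (DGen.wi i))
def uw' (i : Fin (n-1)) : DU n := mk n (Dpre.W' n i)
def uw'i (i : Fin (n-1)) : DU n := mk n (FreeAlgebra.ι Kf (DGen.w'i i))
def ugh : DU n := mk n (Dpre.Gh n)
def ughi : DU n := mk n (Dpre.Ghi n)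
def ug'h : DU n := mk n (Dpre.G'h n)
def ug'hi : DU n := mk n (Dpre.G'hi n)
def ud : DU n := mk n (Dpre.Dd n)
def udi : DU n := mk n (FreeAlgebra.ι Kf DGen.ddi)
def ud' : DU n := mk n (Dpre.Dd' n)
def ud'i : DU n := mk n (FreeAlgebra.ι Kf DGen.dd'i)

def uγ : DU n := ugh n * ugh n
def uγi : DU n := ughi n * ughi n
def uγ' : DU n := ug'h n * ug'h n
def uγ'i : DU n := ug'hi n * ug'hi n

/-- `ω_i(m)` in `𝒰`. -/
def uOm (i : Fin (n-1)) (m : ℕ) : DU n := mk n (Dpre.OmP n i m)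
/-- `ω_i'(-m)` in `𝒰`. -/
def uOm' (i : Fin (n-1)) (m : ℕ) : DU n := mk n (Dpre.OmM n i m)

/-- `x_t^+(k)` indexed by the actual index `t ∈ {1, …, n-1}` (junk value `0` otherwise). -/
def xg (t : ℕ) (k : ℤ) : DU n :=
  if h : 1 ≤ t ∧ t - 1 < n - 1 then uxp n ⟨t-1, h.2⟩ k else 0

/-- `x_t^-(k)` indexed by the actual index `t ∈ {1, …, n-1}` (junk value `0` otherwise). -/
def xmg (t : ℕ) (k : ℤ) : DU n :=
  if h : 1 ≤ t ∧ t - 1 < n - 1 then uxm n ⟨t-1, h.2⟩ k else 0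

/-- the quantum affine root vector `x^+_{α_{ab}}(k)`
 `= [⋯[[x_a^+(k), x_{a+1}^+(0)]_r, x_{a+2}^+(0)]_r, …, x_{b-1}^+(0)]_r`. -/
def xRootP (a : ℕ) (k : ℤ) (b : ℕ) : DU n :=
  nestL rr (fun t => if t = a then xg n t k else xg n t 0) a b

/-- the quantum affine root vector `x^-_{α_{ab}}(k)`
 `= [x_{b-1}^-(0), …, [x_{a+2}^-(0), [x_{a+1}^-(0), x_a^-(k)]_s]_s ⋯]_s`. -/
def xRootM (a : ℕ) (k : ℤ) (b : ℕ) : DU n :=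
  nestR ss (fun t => if t = a then xmg n t k else xmg n t 0) a b

/-- `ω_t` indexed by the actual index `t ∈ {1, …, n-1}`. -/
def wg (t : ℕ) : DU n := if h : 1 ≤ t ∧ t - 1 < n - 1 then uw n ⟨t-1, h.2⟩ else 1
/-- `ω_t⁻¹` indexed by the actual index. -/
def wgi (t : ℕ) : DU n := if h : 1 ≤ t ∧ t - 1 < n - 1 then uwi n ⟨t-1, h.2⟩ else 1
/-- `ω_t'` indexed by the actual index. -/
def w'g (t : ℕ) : DU n := if h : 1 ≤ t ∧ t - 1 < n - 1 then uw' n ⟨t-1, h.2⟩ else 1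
/-- `ω_t'⁻¹` indexed by the actual index. -/
def w'gi (t : ℕ) : DU n := if h : 1 ≤ t ∧ t - 1 < n - 1 then uw'i n ⟨t-1, h.2⟩ else 1
/-- `a_t(ℓ)` indexed by the actual index. -/
def ag (t : ℕ) (l : ℤ) (hl : l ≠ 0) : DU n :=
  if h : 1 ≤ t ∧ t - 1 < n - 1 then ua n ⟨t-1, h.2⟩ l hl else 0

/-- `ω_θ = ω_1 ⋯ ω_{n-1}`. -/
def uωθ : DU n := ((List.finRange (n-1)).map (uw n)).prod
def uωθi : DU n := ((List.finRange (n-1)).map (uwi n)).prod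
def uωθ' : DU n := ((List.finRange (n-1)).map (uw' n)).prod
def uωθ'i : DU n := ((List.finRange (n-1)).map (uw'i n)).prod

/-- `E_0 = x_θ^-(1) ⋅ γ'^{-1} ω_θ^{-1}`. -/
def E0 : DU n := xRootM n 1 1 n * (uγ'i n * uωθi n)
/-- `F_0 = γ^{-1} ω_θ'^{-1} ⋅ x_θ^+(-1)`. -/
def F0 : DU n := (uγi n * uωθ'i n) * xRootP n 1 (-1) n

/-- `E_i = x_i^+(0)`, `F_i = x_i^-(0)` for `i ∈ I`, together with `E_0`, `F_0`;
indexed by `I₀ = {0, 1, …, n-1}`. -/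
def Egen (t : ℕ) : DU n := if t = 0 then E0 n else xg n t 0
def Fgen (t : ℕ) : DU n := if t = 0 then F0 n else xmg n t 0

/-- the subalgebra `𝒰'` generated by the `E_i, F_i (i ∈ I₀)`, the toral generators and
`γ^{±1/2}, γ'^{±1/2}, D^{±1}, D'^{±1}`. -/
def Uprime : Subalgebra Kf (DU n) := Algebra.adjoin Kf
  ((Egen n '' (Set.Iio n)) ∪ (Fgen n '' (Set.Iio n)) ∪
    Set.range (uw n) ∪ Set.range (uwi n) ∪ Set.range (uw' n) ∪ Set.range (uw'i n) ∪
    {ugh n, ughi n, ug'h n, ug'hi n, ud n, udi n, ud' n, ud'i n})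

/-- the subalgebra `𝒰(ñ)` generated by all `x_i^+(k)`. -/
def DNplus : Subalgebra Kf (DU n) := Algebra.adjoin Kf
  {u | ∃ (i : Fin (n-1)) (k : ℤ), u = uxp n i k}

/-- the subalgebra `𝒰(ñ⁻)` generated by all `x_i^-(k)`. -/
def DNminus : Subalgebra Kf (DU n) := Algebra.adjoin Kf
  {u | ∃ (i : Fin (n-1)) (k : ℤ), u = uxm n i k}

end DU
-- ===== auxiliary lemmas =====
section Aux

lemma rh_ne : rh ≠ 0 := by
  rw [rh, map_ne_zero_iff _ (IsFractionRing.injective (MvPolynomial (Fin 2) ℚ) Kf)]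
  exact MvPolynomial.X_ne_zero 0

lemma sh_ne : sh ≠ 0 := by
  rw [sh, map_ne_zero_iff _ (IsFractionRing.injective (MvPolynomial (Fin 2) ℚ) Kf)]
  exact MvPolynomial.X_ne_zero 1

lemma rr_ne : rr ≠ 0 := pow_ne_zero 2 rh_ne
lemma ss_ne : ss ≠ 0 := pow_ne_zero 2 sh_ne

lemma rrss_ne : rr + ss ≠ 0 := by
  have h : rr + ss = algebraMap (MvPolynomial (Fin 2) ℚ) Kf
      (MvPolynomial.X 0 ^ 2 + MvPolynomial.X 1 ^ 2) := by
    simp [rr, ss, rh, sh, map_add, map_pow]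
  rw [h, map_ne_zero_iff _ (IsFractionRing.injective (MvPolynomial (Fin 2) ℚ) Kf)]
  intro hc
  have := congrArg (MvPolynomial.eval fun _ => (1:ℚ)) hc
  simp at this

lemma two_ne : (2 : Kf) ≠ 0 := two_ne_zero

end Aux

namespace DU

variable (n : ℕ)

lemma rel_eq {x y : Dpre.FD n} (h : DRel n x y) : mk n x = mk n y :=
  RingQuot.mkAlgHom_rel Kf h

lemma xm_comm_far (i j : Fin (n-1)) (h : aC (i:ℤ) (j:ℤ) = 0) (m k : ℤ) :
    uxm n i m * uxm n j k = uxm n j k * uxm n i m := by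
  have h2 := rel_eq n (DRel.d91m i j h m k)
  simp only [map_mul] at h2
  exact h2

lemma xm_deg_swap (i : Fin (n-1)) (k : ℤ) :
    uxm n i (k+1) * uxm n i k = (ss * rr⁻¹) • (uxm n i k * uxm n i (k+1)) := by
  have h2 := rel_eq n (DRel.d7m i i k k)
  simp only [map_add, map_sub, map_smul, map_mul, map_zero] at h2
  rw [show ((prH (i:ℤ) (i:ℤ))⁻¹ * prH (i:ℤ) (i:ℤ)) = 1 by
      rw [inv_mul_cancel₀]; rw [prH, if_pos rfl]
      exact mul_ne_zero rh_ne (inv_ne_zero sh_ne),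
    one_smul, ← two_smul Kf] at h2
  have h3 := (smul_eq_zero.mp h2).resolve_left two_ne
  have h4 := sub_eq_zero.mp h3
  rw [show (pr (i:ℤ) (i:ℤ))⁻¹ = ss * rr⁻¹ by
      rw [pr, prH, if_pos rfl, mul_pow, inv_pow, ← rr, ← ss, mul_inv, inv_inv, mul_comm]] at h4
  exact h4

lemma xm_serre_lower (i j : Fin (n-1)) (h : aC (i:ℤ) (j:ℤ) = -1) (hij : (j:ℕ) < (i:ℕ))
    (k : ℤ) :
    uxm n i 0 * (uxm n i 0 * uxm n j k) - (rr+ss) • (uxm n i 0 * (uxm n j k * uxm n i 0))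
      + (rr*ss) • (uxm n j k * (uxm n i 0 * uxm n i 0)) = 0 := by
  have h2 := rel_eq n (DRel.d93m i j h hij 0 0 k)
  simp only [map_add, map_sub, map_smul, map_mul, map_zero] at h2
  rw [← two_smul Kf] at h2
  have h3 := (smul_eq_zero.mp h2).resolve_left two_ne
  simp only [mul_assoc] at h3
  exact h3

lemma xm_serre_upper (i j : Fin (n-1)) (h : aC (i:ℤ) (j:ℤ) = -1) (hij : (i:ℕ) < (j:ℕ)) :
    uxm n i 0 * (uxm n i 0 * uxm n j 0) - (rr⁻¹+ss⁻¹) • (uxm n i 0 * (uxm n j 0 * uxm n i 0))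
      + (rr*ss)⁻¹ • (uxm n j 0 * (uxm n i 0 * uxm n i 0)) = 0 := by
  have h2 := rel_eq n (DRel.d92m i j h hij 0 0 0)
  simp only [map_add, map_sub, map_smul, map_mul, map_zero] at h2
  rw [← two_smul Kf] at h2
  have h3 := (smul_eq_zero.mp h2).resolve_left two_ne
  simp only [mul_assoc] at h3
  exact h3

lemma xm_serre_mixed (i j : Fin (n-1)) (h : aC (i:ℤ) (j:ℤ) = -1) (hij : (i:ℕ) < (j:ℕ)) :
    uxm n i 0 * (uxm n i 1 * uxm n j 0) - (rr⁻¹+ss⁻¹) • (uxm n i 0 * (uxm n j 0 * uxm n i 1))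
      + (rr*ss)⁻¹ • (uxm n j 0 * (uxm n i 0 * uxm n i 1))
      + (uxm n i 1 * (uxm n i 0 * uxm n j 0)
      - (rr⁻¹+ss⁻¹) • (uxm n i 1 * (uxm n j 0 * uxm n i 0))
      + (rr*ss)⁻¹ • (uxm n j 0 * (uxm n i 1 * uxm n i 0))) = 0 := by
  have h2 := rel_eq n (DRel.d92m i j h hij 0 1 0)
  simp only [map_add, map_sub, map_smul, map_mul, map_zero] at h2
  simp only [mul_assoc] at h2
  exact h2

end DU

-- ===== abstract twisted-bracket lemmas (over a generic field, for tactic reasons) =====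
section Brackets0

variable {F : Type} [Field F] {A : Type} [Ring A] [Algebra F A]

/-- generic-field version of `qbr`. -/
def qbr' (q : F) (x y : A) : A := x * y - q • (y * x)

lemma lem_swap' (p q : F) (u v W : A) (h : u*v = v*u) :
    qbr' p u (qbr' q v W) = qbr' q v (qbr' p u W) := by
  have h' : ∀ z : A, u*(v*z) = v*(u*z) := fun z => by rw [← mul_assoc, h, mul_assoc]
  simp only [qbr', mul_sub, sub_mul, smul_sub, mul_smul_comm, smul_mul_assoc, smul_smul,
    mul_assoc, h, h']
  module

lemma lem_L1' (p q : F) (u v C : A) (h : u*C = C*u) :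
    qbr' p u (qbr' q v C) = qbr' q (qbr' p u v) C := by
  have h' : ∀ z : A, u*(C*z) = C*(u*z) := fun z => by rw [← mul_assoc, h, mul_assoc]
  simp only [qbr', mul_sub, sub_mul, smul_sub, mul_smul_comm, smul_mul_assoc, smul_smul,
    mul_assoc, h, h']
  module

lemma qbr_qbr_expand' (p q : F) (u B : A) :
    qbr' p u (qbr' q u B) = u*(u*B) - (p+q) • (u*(B*u)) + (p*q) • (B*(u*u)) := by
  simp only [qbr', mul_sub, sub_mul, smul_sub, mul_smul_comm, smul_mul_assoc, smul_smul, mul_assoc]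
  module

lemma key_mid' (ρ σ : F) (u y B : A) (hρ : ρ ≠ 0) (hσ : σ ≠ 0) (hρσ : ρ + σ ≠ 0)
    (hyB : y*B = B*y)
    (hS1 : u*(u*y) - (ρ⁻¹+σ⁻¹) • (u*(y*u)) + (ρ*σ)⁻¹ • (y*(u*u)) = 0)
    (hS2 : u*(u*B) - (ρ+σ) • (u*(B*u)) + (ρ*σ) • (B*(u*u)) = 0) :
    qbr' (1:F) u (qbr' σ y (qbr' σ u B)) = 0 := by
  have hyB' : ∀ z : A, y*(B*z) = B*(y*z) := fun z => by rw [← mul_assoc, hyB, mul_assoc]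
  have hS1' : (ρ*σ) • (u*(u*y)) - (ρ+σ) • (u*(y*u)) + y*(u*u) = 0 := by
    have h2 := congrArg (fun z : A => (ρ*σ) • z) hS1
    simp only [smul_sub, smul_add, smul_smul, smul_zero] at h2
    rw [show ρ*σ*(ρ⁻¹+σ⁻¹) = ρ+σ by field_simp; ring, show ρ*σ*(ρ*σ)⁻¹ = 1 by field_simp,
      one_smul] at h2
    exact h2
  have key : (ρ+σ) • (qbr' (1:F) u (qbr' σ y (qbr' σ u B))) =
      -(((ρ*σ) • (u*(u*y)) - (ρ+σ) • (u*(y*u)) + y*(u*u))*B)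
      + (σ^2) • (B*((ρ*σ) • (u*(u*y)) - (ρ+σ) • (u*(y*u)) + y*(u*u)))
      + y*(u*(u*B) - (ρ+σ) • (u*(B*u)) + (ρ*σ) • (B*(u*u)))
      - (σ^2) • ((u*(u*B) - (ρ+σ) • (u*(B*u)) + (ρ*σ) • (B*(u*u)))*y) := by
    simp only [qbr', mul_sub, sub_mul, smul_sub, smul_add, add_mul, mul_add, mul_smul_comm,
      smul_mul_assoc, smul_smul, one_smul, mul_assoc, hyB, hyB']
    module
  rw [hS1', hS2] at key
  simp only [zero_mul, mul_zero, smul_zero, neg_zero, add_zero, zero_add, sub_zero] at key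
  exact (smul_eq_zero.mp key).resolve_left hρσ

lemma key_one' (ρ σ : F) (u w v : A) (hρ : ρ ≠ 0) (hσ : σ ≠ 0) (hρσ : ρ + σ ≠ 0)
    (hwu : w*u = (σ*ρ⁻¹) • (u*w))
    (hR : u*(w*v) - (ρ⁻¹+σ⁻¹) • (u*(v*w)) + (ρ*σ)⁻¹ • (v*(u*w))
      + (w*(u*v) - (ρ⁻¹+σ⁻¹) • (w*(v*u)) + (ρ*σ)⁻¹ • (v*(w*u))) = 0) :
    qbr' σ⁻¹ u (qbr' σ v w) = 0 := by
  have hwu' : ∀ z : A, w*(u*z) = (σ*ρ⁻¹) • (u*(w*z)) := fun z => by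
    rw [← mul_assoc, hwu, smul_mul_assoc, mul_assoc]
  have key : (ρ+σ) • (qbr' σ⁻¹ u (qbr' σ v w)) = (-(ρ*σ)) •
      (u*(w*v) - (ρ⁻¹+σ⁻¹) • (u*(v*w)) + (ρ*σ)⁻¹ • (v*(u*w))
      + (w*(u*v) - (ρ⁻¹+σ⁻¹) • (w*(v*u)) + (ρ*σ)⁻¹ • (v*(w*u)))) := by
    simp only [qbr', mul_sub, sub_mul, smul_sub, smul_add, mul_add, add_mul, mul_smul_comm,
      smul_mul_assoc, smul_smul, mul_assoc, hwu, hwu']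
    match_scalars <;> field_simp <;> ring
  rw [hR, smul_zero] at key
  exact (smul_eq_zero.mp key).resolve_left hρσ

end Brackets0

-- ===== specializations to `Kf` =====
section Brackets

variable {A : Type} [Ring A] [Algebra Kf A]

lemma qbr_eq_qbr' (q : Kf) (x y : A) : qbr q x y = qbr' q x y := rfl

lemma qbr_zero_right (q : Kf) (x : A) : qbr q x 0 = 0 := by simp [qbr]

lemma qbr_zero_left (q : Kf) (x : A) : qbr q 0 x = 0 := by simp [qbr]

lemma lem_swap (p q : Kf) (u v W : A) (h : u*v = v*u) :
    qbr p u (qbr q v W) = qbr q v (qbr p u W) := lem_swap' p q u v W h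

lemma lem_L1 (p q : Kf) (u v C : A) (h : u*C = C*u) :
    qbr p u (qbr q v C) = qbr q (qbr p u v) C := lem_L1' p q u v C h

lemma qbr_qbr_expand (p q : Kf) (u B : A) :
    qbr p u (qbr q u B) = u*(u*B) - (p+q) • (u*(B*u)) + (p*q) • (B*(u*u)) :=
  qbr_qbr_expand' p q u B

lemma key_mid (ρ σ : Kf) (u y B : A) (hρ : ρ ≠ 0) (hσ : σ ≠ 0) (hρσ : ρ + σ ≠ 0)
    (hyB : y*B = B*y)
    (hS1 : u*(u*y) - (ρ⁻¹+σ⁻¹) • (u*(y*u)) + (ρ*σ)⁻¹ • (y*(u*u)) = 0)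
    (hS2 : u*(u*B) - (ρ+σ) • (u*(B*u)) + (ρ*σ) • (B*(u*u)) = 0) :
    qbr (1:Kf) u (qbr σ y (qbr σ u B)) = 0 :=
  key_mid' ρ σ u y B hρ hσ hρσ hyB hS1 hS2

lemma key_one (ρ σ : Kf) (u w v : A) (hρ : ρ ≠ 0) (hσ : σ ≠ 0) (hρσ : ρ + σ ≠ 0)
    (hwu : w*u = (σ*ρ⁻¹) • (u*w))
    (hR : u*(w*v) - (ρ⁻¹+σ⁻¹) • (u*(v*w)) + (ρ*σ)⁻¹ • (v*(u*w))
      + (w*(u*v) - (ρ⁻¹+σ⁻¹) • (w*(v*u)) + (ρ*σ)⁻¹ • (v*(w*u))) = 0) :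
    qbr σ⁻¹ u (qbr σ v w) = 0 :=
  key_one' ρ σ u w v hρ hσ hρσ hwu hR

lemma commute_qbr (q : Kf) {u x y : A} (h1 : Commute u x) (h2 : Commute u y) :
    Commute u (qbr q x y) :=
  (h1.mul_right h2).sub_right ((h2.mul_right h1).smul_right q)

lemma commute_nestR (q : Kf) (g : ℕ → A) (a b : ℕ) (u : A) (hab : a < b)
    (h : ∀ t, t < b → Commute u (g t)) : Commute u (nestR q g a b) := by
  induction b with
  | zero => exact absurd hab (by omega)
  | succ b ih =>
    simp only [nestR]
    split
    · exact h a (by omega)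
    · next hba =>
      exact commute_qbr _ (h b (by omega)) (ih (by omega) (fun t ht => h t (by omega)))

end Brackets

-- ===== arithmetic helpers for the Cartan data =====

lemma aC_far (a b : ℕ) (h : a+2 ≤ b ∨ b+2 ≤ a) : aC (a:ℤ) (b:ℤ) = 0 := by
  rw [aC, if_neg (by omega), if_neg (by omega)]

lemma aC_adj (a b : ℕ) (h : b + 1 = a ∨ a + 1 = b) : aC (a:ℤ) (b:ℤ) = -1 := by
  rw [aC, if_neg (by omega), if_pos (by omega)]

namespace DU

-- unfolding lemmas for the root vector

lemma xmg_eq (n t : ℕ) (k : ℤ) (h1 : 1 ≤ t) (h3 : t - 1 < n - 1) :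
    xmg n t k = uxm n ⟨t-1, h3⟩ k := by
  rw [xmg, dif_pos ⟨h1, h3⟩]

lemma xmg_junk (n t : ℕ) (k : ℤ) (h : ¬(1 ≤ t ∧ t - 1 < n - 1)) : xmg n t k = 0 := by
  rw [xmg, dif_neg h]

lemma xRootM_two (n : ℕ) (k : ℤ) : xRootM n 1 k 2 = xmg n 1 k := by
  simp [xRootM, nestR]

lemma xRootM_succ (n : ℕ) (k : ℤ) (b : ℕ) (hb : 2 ≤ b) :
    xRootM n 1 k (b+1) = qbr ss (xmg n b 0) (xRootM n 1 k b) := by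
  simp only [xRootM, nestR]
  rw [if_neg (by omega), if_neg (by omega : ¬ b = 1)]

lemma commute_xmg (n : ℕ) (t t' : ℕ) (k k' : ℤ) (h : t + 2 ≤ t' ∨ t' + 2 ≤ t) :
    Commute (xmg n t k) (xmg n t' k') := by
  by_cases h1 : 1 ≤ t ∧ t - 1 < n - 1
  · by_cases h2 : 1 ≤ t' ∧ t' - 1 < n - 1
    · rw [xmg_eq n t k h1.1 h1.2, xmg_eq n t' k' h2.1 h2.2]
      exact xm_comm_far n ⟨t-1, h1.2⟩ ⟨t'-1, h2.2⟩ (aC_far (t-1) (t'-1) (by omega)) k k'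
    · rw [xmg_junk n t' k' h2]; exact Commute.zero_right _
  · rw [xmg_junk n t k h1]; exact Commute.zero_left _

lemma commute_xmg_xRootM (n : ℕ) (t0 b : ℕ) (k0 : ℤ) (hb : 1 < b)
    (h : ∀ t, t < b → (t + 2 ≤ t0 ∨ t0 + 2 ≤ t)) :
    Commute (xmg n t0 k0) (xRootM n 1 1 b) := by
  apply commute_nestR _ _ _ _ _ hb
  intro t ht
  split <;> exact (commute_xmg n t0 t k0 _ (h t ht).symm)

end DU

-- ===== structure-constant evaluations =====

lemma pr_self (a : ℤ) : pr a a = rr * ss⁻¹ := by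
  rw [pr, prH, if_pos rfl, mul_pow, inv_pow, rr, ss]

lemma pr_up (a b : ℤ) (h : b = a + 1) (h0 : b ≠ a) : pr a b = rr⁻¹ := by
  rw [pr, prH, if_neg h0, if_pos h, inv_pow, rr]

lemma pr_down (a b : ℤ) (h : b = a - 1) (h0 : b ≠ a) (h1 : b ≠ a + 1) : pr a b = ss := by
  rw [pr, prH, if_neg h0, if_neg h1, if_pos h, ss]

lemma pr_far (a b : ℤ) (h0 : b ≠ a) (h1 : b ≠ a+1) (h2 : b ≠ a-1) : pr a b = 1 := by
  rw [pr, prH, if_neg h0, if_neg h1, if_neg h2, one_pow]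

open DU in
theorem stmt13' (n : ℕ) (hn : 2 < n) (i : ℕ) (hi1 : 1 ≤ i) (hi2 : i ≤ n - 1) :
    (∏ j ∈ Finset.Icc 1 (n-1), pr (i : ℤ) (j : ℤ)) =
      (if i = 1 then ss⁻¹ else if i = n - 1 then rr else 1) ∧
    qbr (∏ j ∈ Finset.Icc 1 (n-1), pr (i : ℤ) (j : ℤ)) (xmg n i 0) (xRootM n 1 1 n) = 0 := by
  have hn1 : 2 ≤ n - 1 := by omega
  -- ===== Part 1 : the product of structure constants =====
  have part1 : (∏ j ∈ Finset.Icc 1 (n-1), pr (i : ℤ) (j : ℤ)) =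
      (if i = 1 then ss⁻¹ else if i = n - 1 then rr else 1) := by
    have hprod : ∏ j ∈ Finset.Icc 1 (n-1) ∩ ({i-1, i, i+1} : Finset ℕ), pr (i:ℤ) (j:ℤ)
        = ∏ j ∈ Finset.Icc 1 (n-1), pr (i:ℤ) (j:ℤ) := by
      refine Finset.prod_subset Finset.inter_subset_left ?_
      intro x hx hnx
      simp only [Finset.mem_inter, Finset.mem_insert, Finset.mem_singleton, not_and, not_or,
        Finset.mem_Icc] at hnx hx
      obtain ⟨hx1, hx2, hx3⟩ := hnx hx
      exact pr_far _ _ (by omega) (by omega) (by omega)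
    rw [← hprod]
    rcases eq_or_ne i 1 with rfl | h1
    · rw [if_pos rfl]
      rw [show Finset.Icc 1 (n-1) ∩ ({1-1, 1, 1+1} : Finset ℕ) = {1, 2} by
        ext a
        simp only [Finset.mem_inter, Finset.mem_insert, Finset.mem_singleton, Finset.mem_Icc]
        omega]
      rw [Finset.prod_pair (by norm_num)]
      rw [pr_self, pr_up _ _ (by norm_num) (by norm_num)]
      rw [mul_comm rr ss⁻¹, mul_assoc, mul_inv_cancel₀ rr_ne, mul_one]
    · rcases eq_or_ne i (n-1) with h2 | h2
      · rw [if_neg h1, if_pos h2]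
        rw [show Finset.Icc 1 (n-1) ∩ ({i-1, i, i+1} : Finset ℕ) = {i-1, i} by
          ext a
          simp only [Finset.mem_inter, Finset.mem_insert, Finset.mem_singleton, Finset.mem_Icc]
          omega]
        rw [Finset.prod_pair (by omega)]
        rw [pr_self, pr_down _ _ (by omega) (by omega) (by omega)]
        rw [mul_comm rr ss⁻¹, ← mul_assoc, mul_inv_cancel₀ ss_ne, one_mul]
      · rw [if_neg h1, if_neg h2]
        rw [show Finset.Icc 1 (n-1) ∩ ({i-1, i, i+1} : Finset ℕ) = {i-1, i, i+1} by
          ext a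
          simp only [Finset.mem_inter, Finset.mem_insert, Finset.mem_singleton, Finset.mem_Icc]
          omega]
        rw [Finset.prod_insert (by simp; omega), Finset.prod_pair (by omega)]
        rw [pr_self, pr_down _ _ (by omega) (by omega) (by omega),
          pr_up _ _ (by omega) (by omega)]
        field_simp
        exact div_self (mul_ne_zero ss_ne rr_ne)
  refine ⟨part1, ?_⟩
  rw [part1]
  -- ===== collision lemma : [x_t⁻(0), [x_t⁻(0), x⁻_{α_{1t}}(1)]_s]_r = 0 =====
  have hColl : ∀ t, 2 ≤ t → t ≤ n-1 →
      qbr rr (xmg n t 0) (qbr ss (xmg n t 0) (xRootM n 1 1 t)) = 0 := by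
    intro t h2 ht
    rcases eq_or_ne t 2 with rfl | ht2
    · rw [xRootM_two, qbr_qbr_expand, xmg_eq n 2 0 (by omega) (by omega),
        xmg_eq n 1 1 (by omega) (by omega)]
      exact xm_serre_lower n ⟨2-1, by omega⟩ ⟨1-1, by omega⟩
        (aC_adj (2-1) (1-1) (Or.inl (by norm_num))) (show 1-1 < 2-1 by norm_num) 1
    · have e := xRootM_succ n 1 (t-1) (by omega)
      rw [show t-1+1 = t by omega] at e
      rw [e]
      have hcomm : xmg n t 0 * xRootM n 1 1 (t-1) = xRootM n 1 1 (t-1) * xmg n t 0 :=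
        (commute_xmg_xRootM n t (t-1) 0 (by omega) (fun s hs => Or.inl (by omega))).eq
      rw [lem_L1 ss ss _ _ _ hcomm, lem_L1 rr ss _ _ _ hcomm]
      have hz : qbr rr (xmg n t 0) (qbr ss (xmg n t 0) (xmg n (t-1) 0)) = 0 := by
        rw [qbr_qbr_expand, xmg_eq n t 0 (by omega) (by omega),
          xmg_eq n (t-1) 0 (by omega) (by omega)]
        exact xm_serre_lower n ⟨t-1, by omega⟩ ⟨t-1-1, by omega⟩
          (aC_adj (t-1) (t-1-1) (Or.inl (by omega))) (show t-1-1 < t-1 by omega) 0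
      rw [hz, qbr_zero_left]
  rcases eq_or_ne i 1 with rfl | h1
  · -- ===== case i = 1 =====
    rw [if_pos rfl]
    have hcl : ∀ b, 3 ≤ b → b ≤ n → qbr ss⁻¹ (xmg n 1 0) (xRootM n 1 1 b) = 0 := by
      intro b hb3
      induction b, hb3 using Nat.le_induction with
      | base =>
        intro _
        have e := xRootM_succ n 1 2 (le_refl 2)
        rw [xRootM_two] at e
        rw [show (3:ℕ) = 2+1 from rfl, e]
        rw [xmg_eq n 1 0 (by omega) (by omega), xmg_eq n 2 0 (by omega) (by omega),
          xmg_eq n 1 1 (by omega) (by omega)]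
        refine key_one rr ss _ _ _ rr_ne ss_ne rrss_ne ?_ ?_
        · simpa using xm_deg_swap n ⟨1-1, by omega⟩ 0
        · exact xm_serre_mixed n ⟨1-1, by omega⟩ ⟨2-1, by omega⟩
            (aC_adj (1-1) (2-1) (Or.inr (by norm_num))) (show 1-1 < 2-1 by norm_num)
      | succ b hb ih =>
        intro hbn
        rw [xRootM_succ n 1 b (by omega),
          lem_swap _ _ _ _ _ ((commute_xmg n 1 b 0 0 (Or.inl (by omega))).eq),
          ih (by omega), qbr_zero_right]
    exact hcl n (by omega) le_rfl
  · rcases eq_or_ne i (n-1) with h2 | h2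
    · -- ===== case i = n-1 =====
      rw [if_neg h1, if_pos h2, h2]
      have e := xRootM_succ n 1 (n-1) (by omega)
      rw [show n-1+1 = n by omega] at e
      rw [e]
      exact hColl (n-1) (by omega) le_rfl
    · -- ===== case 1 < i < n-1 =====
      rw [if_neg h1, if_neg h2]
      have hi2' : i + 2 ≤ n := by omega
      have hcl : ∀ b, i+2 ≤ b → b ≤ n → qbr (1:Kf) (xmg n i 0) (xRootM n 1 1 b) = 0 := by
        intro b hb
        induction b, hb using Nat.le_induction with
        | base =>
          intro _
          have e1 : xRootM n 1 1 (i+2) = qbr ss (xmg n (i+1) 0) (xRootM n 1 1 (i+1)) := by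
            have := xRootM_succ n 1 (i+1) (by omega)
            rwa [show i+1+1 = i+2 from rfl] at this
          have e2 : xRootM n 1 1 (i+1) = qbr ss (xmg n i 0) (xRootM n 1 1 i) :=
            xRootM_succ n 1 i (by omega)
          rw [e1, e2]
          refine key_mid rr ss _ _ _ rr_ne ss_ne rrss_ne ?_ ?_ ?_
          · exact (commute_xmg_xRootM n (i+1) i 0 (by omega)
              (fun s hs => Or.inl (by omega))).eq
          · rw [xmg_eq n i 0 (by omega) (by omega), xmg_eq n (i+1) 0 (by omega) (by omega)]
            exact xm_serre_upper n ⟨i-1, by omega⟩ ⟨i+1-1, by omega⟩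
              (aC_adj (i-1) (i+1-1) (Or.inr (by omega))) (show i-1 < i+1-1 by omega)
          · rw [← qbr_qbr_expand]
            exact hColl i (by omega) (by omega)
        | succ b hb ih =>
          intro hbn
          rw [xRootM_succ n 1 b (by omega),
            lem_swap _ _ _ _ _ ((commute_xmg n i b 0 0 (Or.inl (by omega))).eq),
            ih (by omega), qbr_zero_right]
      exact hcl n (by omega) le_rfl

open DU in
/-- Lemma 4.4: `[x_i^-(0), x_θ^-(1)]_{⟨ω_i',ω_θ⟩} = 0` for `i ∈ I`,
where `⟨ω_i',ω_θ⟩ = ∏_{j∈I} ⟨i,j⟩` is explicitly `s⁻¹`, `r`, `1`. -/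
theorem stmt13 (n : ℕ) (hn : 2 < n) (i : ℕ) (hi1 : 1 ≤ i) (hi2 : i ≤ n - 1) :
    (∏ j ∈ Finset.Icc 1 (n-1), pr (i : ℤ) (j : ℤ)) =
      (if i = 1 then ss⁻¹ else if i = n - 1 then rr else 1) ∧
    qbr (∏ j ∈ Finset.Icc 1 (n-1), pr (i : ℤ) (j : ℤ)) (xmg n i 0) (xRootM n 1 1 n) = 0 := by
  exact stmt13' n hn i hi1 hi2
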